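/- Let a ∈ ℝ. There are no real constants A, B, k, Z₀ with A ≠ 0 and k ≠ 0 such that the function U(Z) = A tanh²(k(Z − Z₀)) + B satisfies U⁗ + aU″ + U³ − U = 0 for all Z ∈ ℝ. Equivalently, the compatibility constraint (4a² + 25)(8a⁴ + 55a² + 200) = 0, required for the tanh² family of solutions of the generalized equation to reduce to a solution of the stationary Swift–Hohenberg equation, admits no real solution a. -/

import Mathlib

open Filter Topology

noncomputable section

private lemma hasDerivAt_tanh' (x : ℝ) :
    HasDerivAt Real.tanh (1 - Real.tanh x ^ 2) x := by
  have hc : Real.cosh x ≠ 0 := (Real.cosh_pos x).ne'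
  have h := (Real.hasDerivAt_sinh x).div (Real.hasDerivAt_cosh x) hc
  have hfun : (Real.sinh / Real.cosh) = Real.tanh := by
    funext y; rw [Pi.div_apply, Real.tanh_eq_sinh_div_cosh]
  rw [hfun] at h
  refine h.congr_deriv (Eq.symm ?_)
  have hsq : Real.cosh x ^ 2 - Real.sinh x ^ 2 = 1 := Real.cosh_sq_sub_sinh_sq x
  rw [Real.tanh_eq_sinh_div_cosh]
  field_simp

private lemma tanh_injective' : Function.Injective Real.tanh := by
  intro x y h
  have hx : Real.cosh x ≠ 0 := (Real.cosh_pos x).ne'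
  have hy : Real.cosh y ≠ 0 := (Real.cosh_pos y).ne'
  rw [Real.tanh_eq_sinh_div_cosh, Real.tanh_eq_sinh_div_cosh] at h
  have h2 : Real.sinh x * Real.cosh y = Real.sinh y * Real.cosh x := by
    field_simp at h; linarith
  have h3 : Real.sinh (x - y) = 0 := by
    rw [Real.sinh_sub]; linarith
  have h4 : Real.sinh (x - y) = Real.sinh 0 := by rw [h3, Real.sinh_zero]
  have := Real.sinh_injective h4
  linarith

/-- No `tanh²` profile solves the stationary Swift–Hohenberg equation for real `a`;
equivalently, the compatibility constraint `(4a² + 25)(8a⁴ + 55a² + 200) = 0` has no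
real solution. -/
theorem no_real_tanh_squared_solution (a : ℝ) :
    (¬ ∃ A B k Z₀ : ℝ, A ≠ 0 ∧ k ≠ 0 ∧
      ∀ Z : ℝ,
        iteratedDeriv 4 (fun t => A * Real.tanh (k * (t - Z₀))^2 + B) Z
          + a * iteratedDeriv 2 (fun t => A * Real.tanh (k * (t - Z₀))^2 + B) Z
          + (A * Real.tanh (k * (Z - Z₀))^2 + B)^3
          - (A * Real.tanh (k * (Z - Z₀))^2 + B) = 0) ∧
    (4*a^2 + 25) * (8*a^4 + 55*a^2 + 200) ≠ 0 := by
  constructor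
  · rintro ⟨A, B, k, Z₀, hA, hk, heq⟩
    set T : ℝ → ℝ := fun z => Real.tanh (k * (z - Z₀)) with hTdef
    have hT : ∀ z, HasDerivAt T (k * (1 - T z ^ 2)) z := by
      intro z
      have h1 : HasDerivAt (fun z : ℝ => k * (z - Z₀)) k z := by
        simpa using ((hasDerivAt_id z).sub_const Z₀).const_mul k
      have := (hasDerivAt_tanh' (k * (z - Z₀))).comp z h1
      simpa [hTdef, mul_comm, Function.comp_def] using this
    -- derivative chain
    have h1 : ∀ z, HasDerivAt (fun t => A * Real.tanh (k * (t - Z₀))^2 + B)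
        (2*A*k*(T z - T z^3)) z := by
      intro z
      have := (((hT z).pow 2).const_mul A).add_const B
      exact this.congr_deriv (by ring)
    have h2 : ∀ z, HasDerivAt (fun z => 2*A*k*(T z - T z^3))
        (2*A*k^2*(1 - 4*T z^2 + 3*T z^4)) z := by
      intro z
      have := ((hT z).sub ((hT z).pow 3)).const_mul (2*A*k)
      exact this.congr_deriv (by ring)
    have h3 : ∀ z, HasDerivAt (fun z => 2*A*k^2*(1 - 4*T z^2 + 3*T z^4))
        (2*A*k^3*(-8*T z + 20*T z^3 - 12*T z^5)) z := by
      intro z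
      have := (((hasDerivAt_const z (1:ℝ)).sub (((hT z).pow 2).const_mul 4)).add
        (((hT z).pow 4).const_mul 3)).const_mul (2*A*k^2)
      exact this.congr_deriv (by ring)
    have h4 : ∀ z, HasDerivAt (fun z => 2*A*k^3*(-8*T z + 20*T z^3 - 12*T z^5))
        (2*A*k^4*(-8 + 68*T z^2 - 120*T z^4 + 60*T z^6)) z := by
      intro z
      have := ((((hT z).const_mul (-8)).add (((hT z).pow 3).const_mul 20)).sub
        (((hT z).pow 5).const_mul 12)).const_mul (2*A*k^3)
      exact this.congr_deriv (by ring)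
    have d1 : deriv (fun t => A * Real.tanh (k * (t - Z₀))^2 + B)
        = fun z => 2*A*k*(T z - T z^3) := funext fun z => (h1 z).deriv
    have d2 : deriv (fun z => 2*A*k*(T z - T z^3))
        = fun z => 2*A*k^2*(1 - 4*T z^2 + 3*T z^4) := funext fun z => (h2 z).deriv
    have d3 : deriv (fun z => 2*A*k^2*(1 - 4*T z^2 + 3*T z^4))
        = fun z => 2*A*k^3*(-8*T z + 20*T z^3 - 12*T z^5) := funext fun z => (h3 z).deriv
    have d4 : deriv (fun z => 2*A*k^3*(-8*T z + 20*T z^3 - 12*T z^5))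
        = fun z => 2*A*k^4*(-8 + 68*T z^2 - 120*T z^4 + 60*T z^6) :=
      funext fun z => (h4 z).deriv
    have i2 : iteratedDeriv 2 (fun t => A * Real.tanh (k * (t - Z₀))^2 + B)
        = fun z => 2*A*k^2*(1 - 4*T z^2 + 3*T z^4) := by
      rw [iteratedDeriv_succ, iteratedDeriv_succ, iteratedDeriv_zero, d1, d2]
    have i4 : iteratedDeriv 4 (fun t => A * Real.tanh (k * (t - Z₀))^2 + B)
        = fun z => 2*A*k^4*(-8 + 68*T z^2 - 120*T z^4 + 60*T z^6) := by
      rw [iteratedDeriv_succ, iteratedDeriv_succ, i2, d3, d4]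
    -- the resulting polynomial identity
    set p : Polynomial ℝ :=
      Polynomial.C (-16*A*k^4 + 2*a*A*k^2 + B^3 - B)
      + Polynomial.C (136*A*k^4 - 8*a*A*k^2 + 3*A*B^2 - A) * Polynomial.X^2
      + Polynomial.C (-240*A*k^4 + 6*a*A*k^2 + 3*A^2*B) * Polynomial.X^4
      + Polynomial.C (120*A*k^4 + A^3) * Polynomial.X^6 with hp
    have hroot : ∀ z : ℝ, p.IsRoot (T z) := by
      intro z
      have hz := heq z
      rw [i2, i4] at hz
      simp only [hp, Polynomial.IsRoot, Polynomial.eval_add, Polynomial.eval_mul,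
        Polynomial.eval_pow, Polynomial.eval_C, Polynomial.eval_X]
      have hzT : T z = Real.tanh (k * (z - Z₀)) := rfl
      rw [← hzT] at hz
      linear_combination hz
    have hTinj : Function.Injective T := by
      intro x y h
      have := tanh_injective' h
      have hk' : k ≠ 0 := hk
      field_simp at this
      linarith
    have hinf : {x : ℝ | p.IsRoot x}.Infinite :=
      (Set.infinite_range_of_injective hTinj).mono (by
        rintro _ ⟨z, rfl⟩; exact hroot z)
    have hp0 : p = 0 := p.eq_zero_of_infinite_isRoot hinf
    have hc6 : 120*A*k^4 + A^3 = 0 := by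
      have h6 := congrArg (fun q => Polynomial.coeff q 6) hp0
      simp only [hp, Polynomial.coeff_add, Polynomial.coeff_C_mul,
        Polynomial.coeff_X_pow, Polynomial.coeff_C, Polynomial.coeff_zero] at h6
      norm_num at h6
      linarith
    have hk4 : (0:ℝ) < k^4 := by positivity
    have hA2 : (0:ℝ) < A^2 := by positivity
    have hfac : A * (A^2 + 120*k^4) = 0 := by linear_combination hc6
    rcases mul_eq_zero.mp hfac with h' | h'
    · exact hA h'
    · nlinarith
  · positivity

end
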